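/- Define χ²(p,k,n) = C(p,k)^{-1}·Σ_{ℓ=0}^{k} C(k,ℓ)·C(p-k,ℓ)·2^{n(1-ℓ/k)} - 1. For n ≥ (1-η)·log₂ C(p,k) with η ∈ (0,1), we have χ²(p,k,n) ≥ -1 + (C(p-k,k)/C(p,k))·(1 + (k^{1+η}/p^η)·(p/(p-2k+1))). -/

import Mathlib

open Finset in
lemma pow_div_le_choose (p k : ℕ) (hk : 1 ≤ k) (hkp : k ≤ p) :
    ((p : ℝ) / k) ^ k ≤ p.choose k := by
  have hk0 : (0:ℝ) < k := by exact_mod_cast hk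
  have hnat : p ^ k * Nat.factorial k ≤ k ^ k * p.descFactorial k := by
    have hfac : (∏ i ∈ range k, (k - i)) = Nat.factorial k := by
      have h1 : (∏ i ∈ range k, (k - i)) = ∏ i ∈ range k, ((fun j => j + 1) (k - 1 - i)) := by
        apply Finset.prod_congr rfl
        intro i hi
        simp only [Finset.mem_range] at hi
        show k - i = k - 1 - i + 1
        omega
      rw [h1, Finset.prod_range_reflect (fun j => j + 1) k,
        Finset.prod_range_add_one_eq_factorial]
    calc p ^ k * Nat.factorial k = ∏ i ∈ range k, (p * (k - i)) := by
          rw [Finset.prod_mul_distrib, Finset.prod_const, hfac, Finset.card_range]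
      _ ≤ ∏ i ∈ range k, (k * (p - i)) := by
          apply Finset.prod_le_prod'
          intro i hi
          simp only [Finset.mem_range] at hi
          have h1 : p * (k - i) = p * k - p * i := by
            rw [Nat.mul_sub]
          have h2 : k * (p - i) = k * p - k * i := by
            rw [Nat.mul_sub]
          rw [h1, h2, Nat.mul_comm k p]
          exact Nat.sub_le_sub_left (Nat.mul_le_mul_right i hkp) _
      _ = k ^ k * p.descFactorial k := by
          rw [Finset.prod_mul_distrib, Finset.prod_const, Finset.card_range,
            Nat.descFactorial_eq_prod_range]
  have hdesc : (p.descFactorial k : ℝ) = Nat.factorial k * p.choose k := by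
    exact_mod_cast congrArg (Nat.cast : ℕ → ℝ) (p.descFactorial_eq_factorial_mul_choose k)
  have hR : (p:ℝ) ^ k * Nat.factorial k ≤ (k:ℝ) ^ k * (Nat.factorial k * p.choose k) := by
    rw [← hdesc]; exact_mod_cast hnat
  rw [div_pow, div_le_iff₀ (by positivity)]
  have hfpos : (0:ℝ) < Nat.factorial k := by exact_mod_cast k.factorial_pos
  nlinarith [hR, hfpos]

lemma rpow_div_le_two_rpow (p k n : ℕ) (hk : 1 ≤ k) (hkp : 2 * k ≤ p) (η : ℝ)
    (hη1 : η < 1) (hn' : (n : ℝ) ≥ (1 - η) * Real.logb 2 (p.choose k)) :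
    ((p : ℝ) / k) ^ (1 - η) ≤ (2 : ℝ) ^ ((n : ℝ) / k) := by
  have hk0 : (0:ℝ) < k := by exact_mod_cast hk
  have hp0 : (0:ℝ) < p := by
    have : 2 * k ≤ p := hkp
    have : (0:ℕ) < p := by omega
    exact_mod_cast this
  have hx0 : (0:ℝ) < (p:ℝ) / k := by positivity
  have hx1 : (1:ℝ) ≤ (p:ℝ) / k := by
    rw [le_div_iff₀ hk0]
    have : (k:ℝ) ≤ 2 * k := by linarith
    have h2 : ((2*k : ℕ):ℝ) ≤ (p:ℝ) := by exact_mod_cast hkp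
    push_cast at h2
    linarith
  have hchoose := pow_div_le_choose p k hk (by omega)
  have hlogb : (k:ℝ) * Real.logb 2 ((p:ℝ)/k) ≤ Real.logb 2 (p.choose k) := by
    rw [← Real.logb_pow]
    exact Real.logb_le_logb_of_le (by norm_num) (by positivity) hchoose
  have hlog0 : 0 ≤ Real.logb 2 ((p:ℝ)/k) := Real.logb_nonneg (by norm_num) hx1
  have hkey : (1 - η) * Real.logb 2 ((p:ℝ)/k) ≤ (n:ℝ) / k := by
    rw [le_div_iff₀ hk0]
    calc (1 - η) * Real.logb 2 ((p:ℝ)/k) * k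
        = (1 - η) * ((k:ℝ) * Real.logb 2 ((p:ℝ)/k)) := by ring
      _ ≤ (1 - η) * Real.logb 2 (p.choose k) := by
          apply mul_le_mul_of_nonneg_left hlogb (by linarith)
      _ ≤ n := hn'
  calc ((p:ℝ)/k) ^ (1-η) = ((2:ℝ) ^ Real.logb 2 ((p:ℝ)/k)) ^ (1-η) := by
        rw [Real.rpow_logb (by norm_num) (by norm_num) hx0]
    _ = (2:ℝ) ^ (Real.logb 2 ((p:ℝ)/k) * (1-η)) := by
        rw [← Real.rpow_mul (by norm_num)]
    _ ≤ (2:ℝ) ^ ((n:ℝ)/k) := by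
        apply Real.rpow_le_rpow_of_exponent_le (by norm_num)
        rw [mul_comm]; exact hkey


open Finset in
/-- Lower bound on the chi-squared divergence (Theorem 4, eqs. (53)–(57)): for
`n ≥ (1-η)·log₂ C(p,k)` with `η ∈ (0,1)` and `2k ≤ p`,
`χ²(p,k,n) ≥ -1 + (C(p-k,k)/C(p,k))·(1 + (k^{1+η}/p^η)·(p/(p-2k+1)))`. -/
theorem chi_sq_lower_bound (p k n : ℕ) (hk : 1 ≤ k) (hkp : 2 * k ≤ p) (hn : 1 ≤ n)
    (η : ℝ) (hη0 : 0 < η) (hη1 : η < 1)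
    (hn' : (n : ℝ) ≥ (1 - η) * Real.logb 2 (p.choose k)) :
    (p.choose k : ℝ)⁻¹ *
        ∑ ℓ ∈ range (k + 1),
          (k.choose ℓ : ℝ) * ((p - k).choose ℓ : ℝ) *
            (2 : ℝ) ^ ((n : ℝ) * (1 - (ℓ : ℝ) / k)) - 1
      ≥ -1 + (((p - k).choose k : ℝ) / (p.choose k : ℝ)) *
          (1 + ((k : ℝ) ^ ((1 : ℝ) + η) / (p : ℝ) ^ η) *
            ((p : ℝ) / ((p : ℝ) - 2 * k + 1))) := by
  have hk0 : (0:ℝ) < k := by exact_mod_cast hk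
  have hp0 : (0:ℝ) < p := by
    have : (0:ℕ) < p := by omega
    exact_mod_cast this
  have hCpos : (0:ℝ) < (p.choose k : ℝ) := by
    exact_mod_cast Nat.choose_pos (by omega : k ≤ p)
  have hcK1pos : (0:ℝ) < ((p - k).choose (k-1) : ℝ) := by
    exact_mod_cast Nat.choose_pos (by omega : k - 1 ≤ p - k)
  have hcKpos : (0:ℝ) < ((p - k).choose k : ℝ) := by
    exact_mod_cast Nat.choose_pos (by omega : k ≤ p - k)
  have hpr : (0:ℝ) < (p:ℝ) - 2*k + 1 := by
    have h2 : ((2*k : ℕ):ℝ) ≤ (p:ℝ) := by exact_mod_cast hkp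
    push_cast at h2
    linarith
  -- key identity
  have hid : ((p-k).choose k : ℝ) * k = ((p-k).choose (k-1) : ℝ) * ((p:ℝ) - 2*k + 1) := by
    have h := Nat.choose_succ_right_eq (p-k) (k-1)
    have hk1 : k - 1 + 1 = k := by omega
    rw [hk1] at h
    have hsub : (p - k) - (k - 1) = p - 2*k + 1 := by omega
    rw [hsub] at h
    have hcast : (((p-k).choose k * k : ℕ) : ℝ) = (((p-k).choose (k-1) * (p - 2*k + 1) : ℕ) : ℝ) := by
      exact_mod_cast congrArg (Nat.cast : ℕ → ℝ) h
    push_cast at hcast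
    rw [hcast]
    congr 1
    rw [Nat.cast_sub hkp]
    push_cast
    ring
  -- step A : keep only terms k-1 and k
  have hsubset : ({k-1, k} : Finset ℕ) ⊆ range (k+1) := by
    intro x hx
    simp only [Finset.mem_insert, Finset.mem_singleton] at hx
    simp only [Finset.mem_range]
    omega
  have hA : ∑ ℓ ∈ ({k-1, k} : Finset ℕ),
        (k.choose ℓ : ℝ) * ((p - k).choose ℓ : ℝ) * (2:ℝ) ^ ((n:ℝ) * (1 - (ℓ:ℝ)/k))
      ≤ ∑ ℓ ∈ range (k + 1),
        (k.choose ℓ : ℝ) * ((p - k).choose ℓ : ℝ) * (2:ℝ) ^ ((n:ℝ) * (1 - (ℓ:ℝ)/k)) := by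
    apply Finset.sum_le_sum_of_subset_of_nonneg hsubset
    intro i _ _
    positivity
  rw [Finset.sum_pair (by omega : k - 1 ≠ k)] at hA
  have hfk : (k.choose k : ℝ) * ((p - k).choose k : ℝ) * (2:ℝ) ^ ((n:ℝ) * (1 - (k:ℝ)/k))
      = ((p-k).choose k : ℝ) := by
    rw [Nat.choose_self, div_self (ne_of_gt hk0)]
    norm_num
  have hck1 : (k.choose (k-1) : ℝ) = (k:ℝ) := by
    have h1 : k.choose (k-1) = k := by
      have := Nat.choose_symm (by omega : 1 ≤ k) (n := k)
      simpa using this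
    exact_mod_cast congrArg (Nat.cast : ℕ → ℝ) h1
  have hexp : (n:ℝ) * (1 - ((k-1 : ℕ):ℝ)/k) = (n:ℝ)/k := by
    rw [Nat.cast_sub hk]
    push_cast
    field_simp
    ring
  have hfk1 : (k.choose (k-1) : ℝ) * ((p - k).choose (k-1) : ℝ) * (2:ℝ) ^ ((n:ℝ) * (1 - ((k-1:ℕ):ℝ)/k))
      = (k:ℝ) * ((p-k).choose (k-1) : ℝ) * (2:ℝ) ^ ((n:ℝ)/k) := by
    rw [hck1, hexp]
  rw [hfk, hfk1] at hA
  -- step B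
  have hstepC := rpow_div_le_two_rpow p k n hk hkp η hη1 hn'
  have hkk : (k:ℝ)^η * (k:ℝ)^(1-η) = (k:ℝ) := by
    rw [← Real.rpow_add hk0]
    norm_num
  have hmul : (k:ℝ)^(1-η) * ((p:ℝ)/k)^(1-η) = (p:ℝ)^(1-η) := by
    rw [← Real.mul_rpow hk0.le (by positivity)]
    rw [mul_div_cancel₀ _ (ne_of_gt hk0)]
  have hB0 : (k:ℝ)^η * (p:ℝ)^(1-η) ≤ (k:ℝ) * (2:ℝ) ^ ((n:ℝ)/k) := by
    calc (k:ℝ)^η * (p:ℝ)^(1-η) = (k:ℝ)^η * ((k:ℝ)^(1-η) * ((p:ℝ)/k)^(1-η)) := by rw [hmul]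
      _ = (k:ℝ) * ((p:ℝ)/k)^(1-η) := by rw [← mul_assoc, hkk]
      _ ≤ (k:ℝ) * (2:ℝ) ^ ((n:ℝ)/k) := by
          apply mul_le_mul_of_nonneg_left hstepC hk0.le
  have hk1η : (k:ℝ) ^ ((1:ℝ) + η) = (k:ℝ) * (k:ℝ)^η := by
    rw [Real.rpow_add hk0, Real.rpow_one]
  have hp1η : (p:ℝ) / (p:ℝ)^η = (p:ℝ)^(1-η) := by
    rw [Real.rpow_sub hp0, Real.rpow_one]
  have hpη : (0:ℝ) < (p:ℝ)^η := Real.rpow_pos_of_pos hp0 η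
  have hB : ((p-k).choose k : ℝ) * (((k:ℝ) ^ ((1:ℝ) + η) / (p:ℝ)^η) * ((p:ℝ)/((p:ℝ) - 2*k + 1)))
      ≤ (k:ℝ) * ((p-k).choose (k-1) : ℝ) * (2:ℝ) ^ ((n:ℝ)/k) := by
    have heq : ((p-k).choose k : ℝ) * (((k:ℝ) ^ ((1:ℝ) + η) / (p:ℝ)^η) * ((p:ℝ)/((p:ℝ) - 2*k + 1)))
        = ((p-k).choose (k-1) : ℝ) * ((k:ℝ)^η * (p:ℝ)^(1-η)) := by
      rw [hk1η, ← hp1η]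
      field_simp
      rw [div_eq_iff (by linarith)]
      linear_combination hid
    rw [heq]
    calc ((p-k).choose (k-1) : ℝ) * ((k:ℝ)^η * (p:ℝ)^(1-η))
        ≤ ((p-k).choose (k-1) : ℝ) * ((k:ℝ) * (2:ℝ) ^ ((n:ℝ)/k)) := by
          apply mul_le_mul_of_nonneg_left hB0 hcK1pos.le
      _ = (k:ℝ) * ((p-k).choose (k-1) : ℝ) * (2:ℝ) ^ ((n:ℝ)/k) := by ring
  -- assemble
  have hS : ((p-k).choose k : ℝ) *
        (1 + ((k:ℝ) ^ ((1:ℝ) + η) / (p:ℝ)^η) * ((p:ℝ)/((p:ℝ) - 2*k + 1)))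
      ≤ ∑ ℓ ∈ range (k + 1),
        (k.choose ℓ : ℝ) * ((p - k).choose ℓ : ℝ) * (2:ℝ) ^ ((n:ℝ) * (1 - (ℓ:ℝ)/k)) := by
    have hexpand : ((p-k).choose k : ℝ) *
        (1 + ((k:ℝ) ^ ((1:ℝ) + η) / (p:ℝ)^η) * ((p:ℝ)/((p:ℝ) - 2*k + 1)))
        = ((p-k).choose k : ℝ) + ((p-k).choose k : ℝ) *
          (((k:ℝ) ^ ((1:ℝ) + η) / (p:ℝ)^η) * ((p:ℝ)/((p:ℝ) - 2*k + 1))) := by ring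
    rw [hexpand]
    linarith [hA, hB]
  have hfinal : (((p - k).choose k : ℝ) / (p.choose k : ℝ)) *
        (1 + ((k:ℝ) ^ ((1:ℝ) + η) / (p:ℝ)^η) * ((p:ℝ)/((p:ℝ) - 2*k + 1)))
      ≤ (p.choose k : ℝ)⁻¹ *
        ∑ ℓ ∈ range (k + 1),
          (k.choose ℓ : ℝ) * ((p - k).choose ℓ : ℝ) * (2:ℝ) ^ ((n:ℝ) * (1 - (ℓ:ℝ)/k)) := by
    rw [div_mul_eq_mul_div, div_eq_inv_mul]
    exact mul_le_mul_of_nonneg_left hS (inv_nonneg.mpr hCpos.le)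
  linarith
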